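/- arXiv:0909.4877 — 2 statements merged into one kernel-verified Lean document; each statement's English description precedes it below -/
import Mathlib

section
/- The dimension of the degree-k component of the Orlik–Solomon algebra of the braid arrangement on n strands (equivalently H^k(Cₙ(2);ℂ)) equals the unsigned Stirling number of the first kind c(n, n−k), i.e. the number of permutations of {1,…,n} with exactly n−k cycles. -/
set_option maxHeartbeats 1000000

open Finset

/-- The index data for admissible monomials `A_{i₁,j₁} ⋯ A_{i_k,j_k}` (`i_h < j_h`,
`j₁ < ⋯ < j_k`) in the Orlik–Solomon algebra of the braid arrangement
(`H^*(Cₙ(2); ℂ)` in Arnold's presentation): for each second index `j`, optionally a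
chosen first index `i < j`. -/
def AdmIdx (n : ℕ) : Type :=
  { f : Fin n → Option (Fin n) // ∀ (j : Fin n), ∀ i ∈ f j, i < j }

/-- The length (cohomological degree) of an admissible monomial: the number of
chosen factors. -/
def admSize {n : ℕ} (f : AdmIdx n) : ℕ :=
  (Finset.univ.filter fun j : Fin n => (f.1 j).isSome).card

/-- The number of cycles of a permutation, counting fixed points as cycles (i.e. the
number of blocks of its cycle partition). -/
def numCycles {n : ℕ} (σ : Equiv.Perm (Fin n)) : ℕ :=
  σ.cycleType.card + (Finset.univ.filter fun x : Fin n => σ x = x).card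

section Helpers

open Equiv Equiv.Perm


lemma swap_swap_comm {α : Type*} [DecidableEq α] {a x b : α} (hax : a ≠ x) (hab : a ≠ b)
    (hxb : x ≠ b) : Equiv.swap a x * Equiv.swap x b = Equiv.swap a b * Equiv.swap a x := by
  ext y
  simp only [Equiv.Perm.coe_mul, Function.comp_apply, Equiv.swap_apply_def]
  split_ifs <;> simp_all

lemma formPerm_concat {α : Type*} [DecidableEq α] (b : α) :
    ∀ (l : List α) (a : α), (a :: l).Nodup → b ∉ (a :: l) →
      List.formPerm ((a :: l) ++ [b]) = Equiv.swap a b * List.formPerm (a :: l)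
  | [], a, _, hb => by
    simp only [List.cons_append, List.nil_append, List.formPerm_pair,
      List.formPerm_singleton, mul_one]
  | x :: l', a, hnd, hb => by
    have hax : a ≠ x := by simp at hnd; tauto
    have hab : a ≠ b := by simp at hb; tauto
    have hxb : x ≠ b := by simp at hb; tauto
    have hnd' : (x :: l').Nodup := hnd.of_cons
    have hb' : b ∉ (x :: l') := by simp at hb ⊢; tauto
    have IH := formPerm_concat b l' x hnd' hb'
    simp only [List.cons_append] at IH ⊢
    rw [List.formPerm_cons_cons, List.formPerm_cons_cons, IH, ← mul_assoc,
      swap_swap_comm hax hab hxb, mul_assoc]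

lemma fixed_add_support {n : ℕ} (σ : Equiv.Perm (Fin n)) :
    (Finset.univ.filter fun x : Fin n => σ x = x).card + σ.support.card = n := by
  have := Finset.card_filter_add_card_filter_not
    (s := (univ : Finset (Fin n))) (p := fun x => σ x = x)
  simpa [Equiv.Perm.support, Finset.card_univ] using this

lemma numCycles_swap_mul {n : ℕ} (σ : Equiv.Perm (Fin n)) (a b : Fin n)
    (hb : σ b = b) (hab : a ≠ b) :
    numCycles (Equiv.swap a b * σ) + 1 = numCycles σ := by
  have hbs : b ∉ σ.support := by simp [hb]
  by_cases ha : σ a = a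
  · have hd : Equiv.Perm.Disjoint (Equiv.swap a b) σ := by
      intro x
      by_cases hxa : x = a
      · exact Or.inr (hxa ▸ ha)
      by_cases hxb : x = b
      · exact Or.inr (hxb ▸ hb)
      · exact Or.inl (Equiv.swap_apply_of_ne_of_ne hxa hxb)
    have hct : (Equiv.swap a b * σ).cycleType = (Equiv.swap a b).cycleType + σ.cycleType :=
      hd.cycleType_mul
    have hcards : Multiset.card (Equiv.swap a b).cycleType = 1 := by
      rw [(isCycle_swap hab).cycleType]; rfl
    have hsupp : (Equiv.swap a b * σ).support.card = 2 + σ.support.card := by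
      rw [hd.support_mul, Finset.card_union_of_disjoint hd.disjoint_support,
        Equiv.Perm.card_support_swap hab]
    have h1 := fixed_add_support (Equiv.swap a b * σ)
    have h2 := fixed_add_support σ
    unfold numCycles
    rw [hct, Multiset.card_add, hcards]
    omega
  · have hasupp : a ∈ σ.support := Equiv.Perm.mem_support.2 ha
    set c := σ.cycleOf a with hcdef
    have hc : c.IsCycle := Equiv.Perm.isCycle_cycleOf σ ha
    have hbcs : b ∉ c.support := fun h => hbs (Equiv.Perm.support_cycleOf_le σ a h)
    have hbc : c b = b := Equiv.Perm.notMem_support.1 hbcs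
    set ρ := c⁻¹ * σ with hρdef
    have hσ : σ = c * ρ := by rw [hρdef, mul_inv_cancel_left]
    have hρfix : ∀ x, x ∈ c.support → ρ x = x := by
      intro x hx
      have hsc : σ.SameCycle a x := (Equiv.Perm.mem_support_cycleOf_iff.1 hx).1
      have hcx : c x = σ x := by rw [hcdef, Equiv.Perm.cycleOf_apply, if_pos hsc]
      show c⁻¹ (σ x) = x
      rw [← hcx]; exact Equiv.Perm.inv_eq_iff_eq.2 rfl
    have hρb : ρ b = b := by
      show c⁻¹ (σ b) = b
      rw [hb]
      nth_rewrite 1 [← hbc]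
      exact Equiv.Perm.inv_eq_iff_eq.2 rfl
    have hdisj : Equiv.Perm.Disjoint c ρ := by
      intro x
      by_cases hx : x ∈ c.support
      · exact Or.inr (hρfix x hx)
      · exact Or.inl (Equiv.Perm.notMem_support.1 hx)
    have hform : (σ.toList a).formPerm = c := Equiv.Perm.formPerm_toList σ a
    have hnd : (σ.toList a).Nodup := Equiv.Perm.nodup_toList σ a
    have h2l : 2 ≤ (σ.toList a).length := Equiv.Perm.two_le_length_toList_iff_mem_support.2 hasupp
    have hbl : b ∉ σ.toList a := by
      intro h
      exact hbcs (Equiv.Perm.mem_support_cycleOf_iff.2 (Equiv.Perm.mem_toList_iff.1 h))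
    obtain ⟨t, hlt⟩ : ∃ t, σ.toList a = a :: t := by
      have hcard2 : 2 ≤ (σ.cycleOf a).support.card := by
        rwa [← Equiv.Perm.length_toList]
      obtain ⟨N, hN⟩ : ∃ N, (σ.cycleOf a).support.card = N + 1 :=
        ⟨(σ.cycleOf a).support.card - 1, by omega⟩
      have hform' : σ.toList a = a :: List.iterate σ (σ a) N := by
        show List.iterate σ a ((σ.cycleOf a).support.card) = _
        rw [hN]; rfl
      exact ⟨_, hform'⟩
    rw [hlt] at hform hnd h2l hbl
    have hconcat : List.formPerm ((a :: t) ++ [b]) = Equiv.swap a b * c := by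
      rw [formPerm_concat b t a hnd hbl, hform]
    set g := Equiv.swap a b * c with hgdef
    have hndlb : ((a :: t) ++ [b]).Nodup := by
      rw [List.nodup_append]
      exact ⟨hnd, List.nodup_singleton b, by simp at hbl ⊢; exact ⟨Ne.symm hbl.1, fun x hx h => hbl.2 (h ▸ hx)⟩⟩
    have hg : g.IsCycle := by
      rw [← hconcat]
      exact List.isCycle_formPerm hndlb (by simp)
    have hsuppc : c.support = (a :: t).toFinset := by
      rw [← hform]
      exact List.support_formPerm_of_nodup _ hnd
        (fun x hx => by rw [hx] at h2l; simp at h2l)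
    have hsuppg : g.support = ((a :: t) ++ [b]).toFinset := by
      rw [← hconcat]
      exact List.support_formPerm_of_nodup _ hndlb
        (fun x hx => by apply_fun List.length at hx; simp at hx)
    have hcardg : g.support.card = c.support.card + 1 := by
      rw [hsuppg, hsuppc]
      have : ((a :: t) ++ [b]).toFinset = insert b (a :: t).toFinset := by
        ext x; simp; tauto
      rw [this, Finset.card_insert_of_notMem (by simpa using hbl)]
    have hdisjg : Equiv.Perm.Disjoint g ρ := by
      intro x
      by_cases hx : x ∈ c.support
      · exact Or.inr (hρfix x hx)
      by_cases hxb : x = b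
      · exact Or.inr (hxb ▸ hρb)
      · left
        have hxa : x ≠ a := fun h => hx (h ▸ (Equiv.Perm.mem_support.2
          (by rw [hcdef, Equiv.Perm.cycleOf_apply_self]; exact ha)))
        rw [hgdef, Equiv.Perm.mul_apply, Equiv.Perm.notMem_support.1 hx,
          Equiv.swap_apply_of_ne_of_ne hxa hxb]
    have hmul : Equiv.swap a b * σ = g * ρ := by rw [hσ, hgdef, mul_assoc]
    have hctg : Multiset.card (g * ρ).cycleType = Multiset.card ρ.cycleType + 1 := by
      rw [hdisjg.cycleType_mul, Multiset.card_add, hg.cycleType]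
      simp [add_comm]
    have hctσ : Multiset.card σ.cycleType = Multiset.card ρ.cycleType + 1 := by
      rw [hσ, hdisj.cycleType_mul, Multiset.card_add, hc.cycleType]
      simp [add_comm]
    have hsg : (g * ρ).support.card = g.support.card + ρ.support.card :=
      by rw [hdisjg.support_mul, Finset.card_union_of_disjoint hdisjg.disjoint_support]
    have hsσ : σ.support.card = c.support.card + ρ.support.card := by
      conv_lhs => rw [hσ]
      rw [hdisj.support_mul, Finset.card_union_of_disjoint hdisj.disjoint_support]
    have h1 := fixed_add_support (Equiv.swap a b * σ)
    have h2 := fixed_add_support σ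
    rw [hmul] at h1
    unfold numCycles
    rw [hmul, hctg, hctσ]
    omega


def tswap {n : ℕ} (j : Fin n) : Option (Fin n) → Equiv.Perm (Fin n)
  | none => 1
  | some i => Equiv.swap i j

def phiAux {n : ℕ} (f : Fin n → Option (Fin n)) : ℕ → Equiv.Perm (Fin n)
  | 0 => 1
  | m + 1 => (if h : m < n then tswap ⟨m, h⟩ (f ⟨m, h⟩) else 1) * phiAux f m

def OK {n : ℕ} (f : Fin n → Option (Fin n)) : Prop := ∀ j i, f j = some i → i < j

lemma phiAux_succ {n : ℕ} (f : Fin n → Option (Fin n)) (m : ℕ) (h : m < n) :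
    phiAux f (m + 1) = tswap ⟨m, h⟩ (f ⟨m, h⟩) * phiAux f m := by
  show (if h : m < n then _ else _) * _ = _
  rw [dif_pos h]

lemma phiAux_fix_ge {n : ℕ} {f : Fin n → Option (Fin n)} (hf : OK f) :
    ∀ m (x : Fin n), m ≤ x.val → phiAux f m x = x := by
  intro m
  induction m with
  | zero => intro x _; rfl
  | succ m IH =>
    intro x hx
    have hx' : phiAux f m x = x := IH x (by omega)
    show ((if h : m < n then tswap ⟨m, h⟩ (f ⟨m, h⟩) else 1) * phiAux f m) x = x
    rw [Equiv.Perm.mul_apply, hx']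
    split_ifs with h
    · cases hfm : f ⟨m, h⟩ with
      | none => simp [tswap]
      | some i =>
        have hi : i.val < m := hf ⟨m, h⟩ i hfm
        exact Equiv.swap_apply_of_ne_of_ne (Fin.ne_of_val_ne (by omega))
          (Fin.ne_of_val_ne (by simp; omega))
    · simp

lemma phiAux_congr {n : ℕ} {f g : Fin n → Option (Fin n)} (m : ℕ)
    (h : ∀ j : Fin n, j.val < m → f j = g j) : phiAux f m = phiAux g m := by
  induction m with
  | zero => rfl
  | succ m IH =>
    show (if h : m < n then tswap ⟨m, h⟩ (f ⟨m, h⟩) else 1) * phiAux f m =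
      (if h : m < n then tswap ⟨m, h⟩ (g ⟨m, h⟩) else 1) * phiAux g m
    rw [IH (fun j hj => h j (by omega))]
    congr 1
    split_ifs with hmn
    · rw [h ⟨m, hmn⟩ (by simp)]
    · rfl

lemma phiAux_apply_top {n : ℕ} {f : Fin n → Option (Fin n)} (hf : OK f) (m : ℕ) (h : m < n) :
    phiAux f (m + 1) ⟨m, h⟩ = (f ⟨m, h⟩).getD ⟨m, h⟩ := by
  rw [phiAux_succ f m h, Equiv.Perm.mul_apply, phiAux_fix_ge hf m ⟨m, h⟩ (le_refl m)]
  cases hfm : f ⟨m, h⟩ with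
  | none => simp [tswap]
  | some i => simp [tswap, Equiv.swap_apply_right]

lemma phiAux_inj {n : ℕ} {f g : Fin n → Option (Fin n)} (hf : OK f) (hg : OK g) :
    ∀ m, m ≤ n → phiAux f m = phiAux g m → ∀ j : Fin n, j.val < m → f j = g j := by
  intro m
  induction m with
  | zero => intro _ _ j hj; omega
  | succ m IH =>
    intro hmn heq j hj
    have h : m < n := by omega
    have hval : (f ⟨m, h⟩).getD ⟨m, h⟩ = (g ⟨m, h⟩).getD ⟨m, h⟩ := by
      rw [← phiAux_apply_top hf m h, ← phiAux_apply_top hg m h, heq]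
    have hfg : f ⟨m, h⟩ = g ⟨m, h⟩ := by
      cases hfm : f ⟨m, h⟩ with
      | none => cases hgm : g ⟨m, h⟩ with
        | none => rfl
        | some i =>
          rw [hfm, hgm] at hval
          have := hg ⟨m, h⟩ i hgm
          simp at hval
          rw [← hval] at this
          exact absurd this (lt_irrefl _)
      | some i => cases hgm : g ⟨m, h⟩ with
        | none =>
          rw [hfm, hgm] at hval
          have := hf ⟨m, h⟩ i hfm
          simp at hval
          rw [hval] at this
          exact absurd this (lt_irrefl _)
        | some i' =>
          rw [hfm, hgm] at hval
          simpa using hval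
    by_cases hjm : j.val < m
    · refine IH (by omega) ?_ j hjm
      have := heq
      rw [phiAux_succ f m h, phiAux_succ g m h, hfg] at this
      exact mul_left_cancel this
    · have : j = ⟨m, h⟩ := Fin.ext (by show j.val = m; omega)
      rw [this, hfg]

lemma phiAux_surj {n : ℕ} :
    ∀ m, m ≤ n → ∀ σ : Equiv.Perm (Fin n), (∀ x : Fin n, m ≤ x.val → σ x = x) →
      ∃ f : Fin n → Option (Fin n), OK f ∧ (∀ j : Fin n, m ≤ j.val → f j = none) ∧
        phiAux f m = σ := by
  intro m
  induction m with
  | zero =>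
    intro _ σ hσ
    exact ⟨fun _ => none, fun j i h => by simp at h, fun _ _ => rfl,
      (Equiv.ext fun x => (hσ x (Nat.zero_le _)).symm)⟩
  | succ m IH =>
    intro hmn σ hσ
    have h : m < n := by omega
    set b : Fin n := ⟨m, h⟩ with hbdef
    by_cases hσb : σ b = b
    · obtain ⟨f, hOK, hnone, hphi⟩ := IH (by omega) σ (by
        intro x hx
        rcases Nat.eq_or_lt_of_le hx with hx' | hx'
        · have : x = b := Fin.ext hx'.symm
          rw [this]; exact hσb
        · exact hσ x (by omega))
      refine ⟨f, hOK, fun j hj => hnone j (by omega), ?_⟩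
      rw [phiAux_succ f m h, hnone b (le_refl m)]
      show tswap b none * _ = _
      rw [show tswap b (none : Option (Fin n)) = 1 from rfl, one_mul, hphi]
    · obtain ⟨a, hadef⟩ : ∃ a, σ b = a := ⟨σ b, rfl⟩
      have hab : a ≠ b := fun hh => hσb (by rw [hadef, hh])
      have haval : a.val < m := by
        rcases lt_or_ge a.val m with h' | h'
        · exact h'
        rcases Nat.eq_or_lt_of_le h' with h'' | h''
        · exact absurd (Fin.ext (by show a.val = m; omega) : a = b) hab
        · have h1 : σ a = a := hσ a (by omega)
          have h2 : σ a = σ b := by rw [h1, hadef]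
          exact absurd (σ.injective h2) hab
      obtain ⟨f', hOK', hnone', hphi'⟩ := IH (by omega) (Equiv.swap a b * σ) (by
        intro x hx
        rcases Nat.eq_or_lt_of_le hx with hx' | hx'
        · have hxb : x = b := Fin.ext (by show x.val = m; omega)
          rw [hxb, Equiv.Perm.mul_apply, hadef, Equiv.swap_apply_left]
        · have h1 : σ x = x := hσ x (by omega)
          rw [Equiv.Perm.mul_apply, h1, Equiv.swap_apply_of_ne_of_ne
            (Fin.ne_of_val_ne (by omega)) (Fin.ne_of_val_ne (by show x.val ≠ m; omega))])
      refine ⟨Function.update f' b (some a), ?_, ?_, ?_⟩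
      · intro j i hj
        by_cases hjb : j = b
        · rw [hjb, Function.update_self] at hj
          have : i = a := by injection hj with hh; exact hh.symm
          rw [this, hjb]
          exact Fin.mk_lt_mk.2 haval |>.trans_le (le_refl _) |>.trans_eq rfl
        · rw [Function.update_of_ne hjb] at hj
          exact hOK' j i hj
      · intro j hj
        have hjb : j ≠ b := Fin.ne_of_val_ne (by show j.val ≠ m; omega)
        rw [Function.update_of_ne hjb]
        exact hnone' j (by omega)
      · rw [phiAux_succ _ m h, phiAux_congr m (fun j hj => Function.update_of_ne
          (Fin.ne_of_val_ne (by show j.val ≠ m; omega)) _ _), hphi']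
        show tswap b (Function.update f' b (some a) b) * (Equiv.swap a b * σ) = σ
        rw [Function.update_self]
        show Equiv.swap a b * (Equiv.swap a b * σ) = σ
        rw [← mul_assoc, Equiv.swap_mul_self, one_mul]

lemma numCycles_one {n : ℕ} : numCycles (1 : Equiv.Perm (Fin n)) = n := by
  unfold numCycles
  simp [Equiv.Perm.cycleType_one, Finset.card_univ]

lemma phiAux_numCycles {n : ℕ} {f : Fin n → Option (Fin n)} (hf : OK f) :
    ∀ m, m ≤ n → numCycles (phiAux f m) +
      (Finset.univ.filter fun j : Fin n => j.val < m ∧ (f j).isSome).card = n := by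
  intro m
  induction m with
  | zero => simp [phiAux, numCycles_one]
  | succ m IH =>
    intro hmn
    have h : m < n := by omega
    have IH' := IH (by omega)
    rw [phiAux_succ f m h]
    cases hfm : f ⟨m, h⟩ with
    | none =>
      have hfilt : (Finset.univ.filter fun j : Fin n => j.val < m + 1 ∧ (f j).isSome) =
          (Finset.univ.filter fun j : Fin n => j.val < m ∧ (f j).isSome) := by
        ext j
        simp only [Finset.mem_filter, Finset.mem_univ, true_and]
        constructor
        · rintro ⟨hj1, hj2⟩
          refine ⟨?_, hj2⟩
          rcases Nat.lt_or_ge j.val m with h' | h'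
          · exact h'
          · exfalso
            have : j = ⟨m, h⟩ := Fin.ext (by show j.val = m; omega)
            rw [this, hfm] at hj2
            simp at hj2
        · rintro ⟨hj1, hj2⟩; exact ⟨by omega, hj2⟩
      rw [hfilt, show tswap (⟨m, h⟩ : Fin n) (none : Option (Fin n)) = 1 from rfl, one_mul]
      exact IH'
    | some i =>
      have hib : i < (⟨m, h⟩ : Fin n) := hf ⟨m, h⟩ i hfm
      have hfix : phiAux f m ⟨m, h⟩ = ⟨m, h⟩ := phiAux_fix_ge hf m ⟨m, h⟩ (le_refl m)
      have hmerge := numCycles_swap_mul (phiAux f m) i ⟨m, h⟩ hfix (Fin.ne_of_lt hib)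
      have hfilt : (Finset.univ.filter fun j : Fin n => j.val < m + 1 ∧ (f j).isSome) =
          insert ⟨m, h⟩ (Finset.univ.filter fun j : Fin n => j.val < m ∧ (f j).isSome) := by
        ext j
        simp only [Finset.mem_filter, Finset.mem_univ, true_and, Finset.mem_insert]
        constructor
        · rintro ⟨hj1, hj2⟩
          rcases Nat.lt_or_ge j.val m with h' | h'
          · exact Or.inr ⟨h', hj2⟩
          · exact Or.inl (Fin.ext (by show j.val = m; omega))
        · rintro (rfl | ⟨hj1, hj2⟩)
          · exact ⟨by show m < m + 1; omega, by rw [hfm]; rfl⟩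
          · exact ⟨by omega, hj2⟩
      have hnotmem : (⟨m, h⟩ : Fin n) ∉
          (Finset.univ.filter fun j : Fin n => j.val < m ∧ (f j).isSome) := by
        simp only [Finset.mem_filter, Finset.mem_univ, true_and, not_and]
        intro hlt
        exact absurd (show m < m from hlt) (lt_irrefl m)
      rw [hfilt, Finset.card_insert_of_notMem hnotmem,
        show tswap (⟨m, h⟩ : Fin n) (some i) = Equiv.swap i ⟨m, h⟩ from rfl]
      rw [← hmerge] at IH'
      omega


end Helpers

/-- The dimension of the degree-`k` component of
`H^*(Cₙ(2); ℂ)` — i.e. the number of admissible monomials of length `k` — equals the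
unsigned Stirling number of the first kind `c(n, n-k)`, the number of permutations of
`{1, …, n}` with exactly `n - k` cycles. -/
theorem dim_eq_stirling (n k : ℕ) (hk : k < n) :
    Nat.card { f : AdmIdx n // admSize f = k } =
      Nat.card { σ : Equiv.Perm (Fin n) // numCycles σ = n - k } := by
  have hOK : ∀ f : AdmIdx n, OK f.1 := by
    intro f j i h
    exact f.2 j i (by simpa [Option.mem_def] using h)
  have hinj : Function.Injective (fun f : AdmIdx n => phiAux f.1 n) := by
    intro f g hfg
    apply Subtype.ext
    funext j
    exact phiAux_inj (hOK f) (hOK g) n le_rfl hfg j j.isLt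
  have hsurj : Function.Surjective (fun f : AdmIdx n => phiAux f.1 n) := by
    intro σ
    obtain ⟨f, hfOK, -, hphi⟩ := phiAux_surj n le_rfl σ
      (fun x hx => absurd x.isLt (by omega))
    exact ⟨⟨f, fun j i h => hfOK j i (by simpa [Option.mem_def] using h)⟩, hphi⟩
  have key : ∀ f : AdmIdx n, numCycles (phiAux f.1 n) + admSize f = n := by
    intro f
    have h1 := phiAux_numCycles (hOK f) n le_rfl
    have h2 : (Finset.univ.filter fun j : Fin n => j.val < n ∧ (f.1 j).isSome) =
        (Finset.univ.filter fun j : Fin n => (f.1 j).isSome) := by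
      apply Finset.filter_congr
      intro j _
      simp [j.isLt]
    rw [h2] at h1
    exact h1
  have e : { f : AdmIdx n // admSize f = k } ≃
      { σ : Equiv.Perm (Fin n) // numCycles σ = n - k } := by
    refine Equiv.subtypeEquiv (Equiv.ofBijective _ ⟨hinj, hsurj⟩) ?_
    intro f
    have hkey := key f
    constructor
    · intro h
      change numCycles (phiAux f.1 n) = n - k
      omega
    · intro h
      change numCycles (phiAux f.1 n) = n - k at h
      omega
  exact Nat.card_congr e
end

section
/- Let n = 2k and let A = H*(Cₙ(d);ℂ) with d odd, presented as the commutative algebra with generators A_{i,j} = −A_{j,i} of degree d−1 and relations A_{i,j}A_{i,k} − A_{i,j}A_{j,k} + A_{i,k}A_{j,k} = 0. Then the antisymmetrizer x = Σ_{σ∈Sₙ} sgn(σ) A_{σ(1),σ(2)} A_{σ(3),σ(4)} ⋯ A_{σ(n-1),σ(n)} is a nonzero element of the degree k(d−1) component, and every τ ∈ Sₙ acts on x by τ·x = sgn(τ)·x. -/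
open Finset Equiv MvPolynomial

/-- Index type for the generators `A_{i,j}`, `i < j`. -/
def OPairs (n : ℕ) : Type := { p : Fin n × Fin n // p.1 < p.2 }

/-- The free commutative algebra on the generators `A_{i,j}`, `i < j` (for `d` odd the
generators of `H^*(Cₙ(d); ℂ)` have even degree `d - 1`, hence commute). -/
abbrev FreeOdd (n : ℕ) := MvPolynomial (OPairs n) ℂ

/-- The ideal of relations of `H^*(Cₙ(d); ℂ)` for `d` odd: the squares `A_{i,j}² = 0`
and the Arnold relations `A_{i,j}A_{i,k} - A_{i,j}A_{j,k} + A_{i,k}A_{j,k} = 0`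
for `i < j < k`. -/
noncomputable def oddRelIdeal (n : ℕ) : Ideal (FreeOdd n) :=
  Ideal.span
    ({x | ∃ (i j : Fin n) (h : i < j), x = X (σ := OPairs n) ⟨(i, j), h⟩ ^ 2} ∪
      {x | ∃ (i j k : Fin n) (hij : i < j) (hjk : j < k),
        x = X (σ := OPairs n) ⟨(i, j), hij⟩ * X ⟨(i, k), hij.trans hjk⟩ -
              X (σ := OPairs n) ⟨(i, j), hij⟩ * X ⟨(j, k), hjk⟩ +
              X (σ := OPairs n) ⟨(i, k), hij.trans hjk⟩ * X ⟨(j, k), hjk⟩})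

/-- The cohomology algebra `H^*(Cₙ(d); ℂ)` for `d` odd: the commutative algebra with
generators `A_{i,j} = -A_{j,i}` (of even degree `d - 1`) modulo the Arnold relations. -/
abbrev OSOdd (n : ℕ) := FreeOdd n ⧸ oddRelIdeal n

/-- The generator `A_{i,j}` in `H^*(Cₙ(d); ℂ)` (`d` odd), for arbitrary `i, j`, with
the conventions `A_{i,j} = -A_{j,i}` and `A_{i,i} = 0`. -/
noncomputable def Agen {n : ℕ} (i j : Fin n) : OSOdd n :=
  if h : i < j then Ideal.Quotient.mk (oddRelIdeal n) (X ⟨(i, j), h⟩)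
  else if h' : j < i then -(Ideal.Quotient.mk (oddRelIdeal n) (X ⟨(j, i), h'⟩)) else 0

/-- The `s`-th even position `2s` in `Fin (2k)`. -/
def dbl {k : ℕ} (s : Fin k) : Fin (2 * k) := ⟨2 * s.1, by omega⟩

/-- The `s`-th odd position `2s + 1` in `Fin (2k)`. -/
def dbl1 {k : ℕ} (s : Fin k) : Fin (2 * k) := ⟨2 * s.1 + 1, by omega⟩

namespace AntiSym

/-- Signed lift of the generator `A_{i,j}` to the free algebra. -/
noncomputable def Xs {n : ℕ} (i j : Fin n) : FreeOdd n :=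
  if h : i < j then X ⟨(i, j), h⟩
  else if h' : j < i then -X ⟨(j, i), h'⟩ else 0

lemma Agen_eq_mk {n : ℕ} (i j : Fin n) :
    Agen i j = Ideal.Quotient.mk (oddRelIdeal n) (Xs i j) := by
  unfold Agen Xs
  split_ifs <;> simp

/-- The "symplectic" coefficient matrix. -/
def cc {n : ℕ} (i j : Fin n) : ℤ :=
  if j.1 = i.1 + 1 ∧ i.1 % 2 = 0 then 1
  else if i.1 = j.1 + 1 ∧ j.1 % 2 = 0 then -1 else 0

lemma cc_antisymm {n : ℕ} {i j : Fin n} (h : i ≠ j) : cc i j = -cc j i := by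
  have : i.1 ≠ j.1 := fun hv => h (Fin.ext hv)
  unfold cc; split_ifs <;> omega

lemma cc_diag {n : ℕ} (i : Fin n) : cc i i = 0 := by
  unfold cc; split_ifs <;> omega

lemma cc_cases {n : ℕ} {a b : Fin n} (h : cc a b ≠ 0) :
    (b.1 = a.1 + 1 ∧ a.1 % 2 = 0) ∨ (a.1 = b.1 + 1 ∧ b.1 % 2 = 0) := by
  unfold cc at h
  split_ifs at h with h1 h2
  · exact Or.inl h1
  · exact Or.inr h2
  · exact absurd rfl h

lemma cc_eq_one {n : ℕ} {a b : Fin n} (h : b.1 = a.1 + 1 ∧ a.1 % 2 = 0) :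
    cc a b = 1 := by unfold cc; rw [if_pos h]

lemma cc_eq_negone {n : ℕ} {a b : Fin n} (h : a.1 = b.1 + 1 ∧ b.1 % 2 = 0) :
    cc a b = -1 := by unfold cc; rw [if_neg (by omega), if_pos h]

/-- The evaluation map `A_{i,j} ↦ c_{ij}·xᵢxⱼ`. -/
noncomputable def Φ (n : ℕ) : FreeOdd n →ₐ[ℂ] MvPolynomial (Fin n) ℂ :=
  aeval (fun p : OPairs n => C ((cc p.1.1 p.1.2 : ℤ) : ℂ) * (X p.1.1 * X p.1.2))

lemma Φ_X {n : ℕ} (p : OPairs n) :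
    Φ n (X p) = C ((cc p.1.1 p.1.2 : ℤ) : ℂ) * (X p.1.1 * X p.1.2) := by
  simp [Φ]

lemma Φ_X' {n : ℕ} {i j : Fin n} (h : i < j) :
    Φ n (X ⟨(i, j), h⟩) = C ((cc i j : ℤ) : ℂ) * (X i * X j) :=
  Φ_X _

lemma Φ_Xs {n : ℕ} (i j : Fin n) :
    Φ n (Xs i j) = C ((cc i j : ℤ) : ℂ) * (X i * X j) := by
  unfold Xs
  split_ifs with h h'
  · exact Φ_X _
  · rw [map_neg, Φ_X' h']
    rw [cc_antisymm (show i ≠ j from fun e => (by subst e; exact lt_irrefl i h'))]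
    simp only [Int.cast_neg, map_neg]
    ring
  · have : i = j := le_antisymm (not_lt.1 h') (not_lt.1 h)
    subst this
    simp [cc_diag]

/-- The exponent of the square-free monomial `x₁⋯xₙ`. -/
noncomputable def uu (n : ℕ) : Fin n →₀ ℕ := ∑ i, Finsupp.single i 1

lemma uu_apply {n : ℕ} (j : Fin n) : uu n j = 1 := by
  simp [uu, Finsupp.finset_sum_apply, Finsupp.single_apply]

lemma coeff_uu_of_sq {n : ℕ} (i : Fin n) (f : MvPolynomial (Fin n) ℂ)
    (h : ∃ g, f = X i ^ 2 * g) : coeff (uu n) f = 0 := by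
  obtain ⟨g, rfl⟩ := h
  have e : X (R := ℂ) i ^ 2 * g = (g * X i) * X i := by ring
  rw [e, coeff_mul_X', if_pos, coeff_mul_X', if_neg]
  · simp [Finsupp.mem_support_iff, uu_apply]
  · simp [Finsupp.mem_support_iff, uu_apply]

lemma coeff_uu_Phi {n : ℕ} {f : FreeOdd n} (hf : f ∈ oddRelIdeal n) :
    ∀ r : MvPolynomial (Fin n) ℂ, coeff (uu n) (r * Φ n f) = 0 := by
  refine Submodule.span_induction ?_ ?_ ?_ ?_ hf
  · rintro x hx r
    rcases hx with ⟨i, j, hij, rfl⟩ | ⟨i, j, l, hij, hjl, rfl⟩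
    · refine coeff_uu_of_sq i _ ⟨r * (C ((cc i j : ℤ) : ℂ) ^ 2 * X j ^ 2), ?_⟩
      rw [map_pow, Φ_X' hij]
      ring
    · rw [map_add, map_sub, map_mul, map_mul, map_mul, Φ_X' hij, Φ_X' (hij.trans hjl),
        Φ_X' hjl, mul_add, mul_sub, coeff_add, coeff_sub,
        coeff_uu_of_sq i _ ⟨r * (C ((cc i j : ℤ) : ℂ) * C ((cc i l : ℤ) : ℂ) * (X j * X l)),
          by ring⟩,
        coeff_uu_of_sq j _ ⟨r * (C ((cc i j : ℤ) : ℂ) * C ((cc j l : ℤ) : ℂ) * (X i * X l)),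
          by ring⟩,
        coeff_uu_of_sq l _ ⟨r * (C ((cc i l : ℤ) : ℂ) * C ((cc j l : ℤ) : ℂ) * (X i * X j)),
          by ring⟩]
      ring
  · intro r; simp
  · intro x y _ _ px py r
    rw [map_add, mul_add, coeff_add, px r, py r, add_zero]
  · intro a x _ px r
    rw [smul_eq_mul, map_mul, ← mul_assoc, px]

def pairEquiv (k : ℕ) : Fin 2 × Fin k ≃ Fin (2 * k) where
  toFun p := ⟨2 * p.2.1 + p.1.1, by omega⟩
  invFun i := (⟨i.1 % 2, by omega⟩, ⟨i.1 / 2, by omega⟩)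
  left_inv := by
    rintro ⟨r, s⟩
    have hr := r.2
    refine Prod.ext (Fin.ext ?_) (Fin.ext ?_) <;> simp <;> omega
  right_inv := by
    intro i
    have := i.2
    refine Fin.ext ?_
    simp
    omega

lemma sign_eq {k : ℕ} : ∀ (m : ℕ) (σ : Perm (Fin (2 * k))),
    (univ.filter fun s : Fin k => (σ (dbl s)).1 % 2 = 1).card = m →
    (∀ s : Fin k, cc (σ (dbl s)) (σ (dbl1 s)) ≠ 0) →
    (Perm.sign σ : ℤ) * ∏ s : Fin k, cc (σ (dbl s)) (σ (dbl1 s)) = 1 := by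
  intro m
  induction m with
  | zero =>
    intro σ hm h
    have heven : ∀ s : Fin k, (σ (dbl s)).1 % 2 = 0 := by
      intro s
      have : s ∉ (univ.filter fun s : Fin k => (σ (dbl s)).1 % 2 = 1) := by
        rw [Finset.card_eq_zero.1 hm]; exact notMem_empty s
      simp at this
      omega
    have hstep : ∀ s : Fin k, (σ (dbl1 s)).1 = (σ (dbl s)).1 + 1 := by
      intro s
      rcases cc_cases (h s) with h1 | h2
      · exact h1.1
      · have := heven s; omega
    set π : Fin k → Fin k := fun s => ⟨(σ (dbl s)).1 / 2, by have := (σ (dbl s)).2; omega⟩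
      with hπ
    have hinj : Function.Injective π := by
      intro s t hst
      have h1 : (σ (dbl s)).1 / 2 = (σ (dbl t)).1 / 2 := congrArg Fin.val hst
      have h2 : σ (dbl s) = σ (dbl t) := by
        have := heven s; have := heven t
        exact Fin.ext (by omega)
      have := σ.injective h2
      have : (dbl s).1 = (dbl t).1 := congrArg Fin.val this
      simp [dbl] at this
      exact Fin.ext this
    have hbij := (Finite.injective_iff_bijective).1 hinj
    set πE := Equiv.ofBijective π hbij with hπE
    have hσ : σ = (pairEquiv k).permCongr (Equiv.prodCongrRight fun _ : Fin 2 => πE) := by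
      apply Equiv.ext
      intro i
      apply Fin.ext
      have hiv := i.2
      have key : ((pairEquiv k).permCongr (Equiv.prodCongrRight fun _ : Fin 2 => πE) i).1
          = 2 * ((σ (dbl ⟨i.1 / 2, by omega⟩)).1 / 2) + i.1 % 2 := by
        simp [Equiv.permCongr_apply, pairEquiv, Equiv.prodCongrRight, hπE,
          Equiv.ofBijective, hπ]
      rw [key]
      rcases Nat.even_or_odd i.1 with he | ho
      · have hm2 : i.1 % 2 = 0 := Nat.even_iff.1 he
        have hieq : i = dbl ⟨i.1 / 2, by omega⟩ := Fin.ext (by simp [dbl]; omega)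
        rw [← hieq]
        have := heven ⟨i.1 / 2, by omega⟩
        rw [← hieq] at this
        omega
      · have hm2 : i.1 % 2 = 1 := Nat.odd_iff.1 ho
        have hieq : i = dbl1 ⟨i.1 / 2, by omega⟩ := Fin.ext (by simp [dbl1]; omega)
        have h1 := hstep ⟨i.1 / 2, by omega⟩
        have h2 := heven ⟨i.1 / 2, by omega⟩
        rw [← hieq] at h1
        omega
    have hsign : Perm.sign σ = 1 := by
      rw [hσ, Equiv.Perm.sign_permCongr, Equiv.Perm.sign_prodCongrRight]
      simp [Int.units_sq]
    rw [hsign]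
    simp only [Units.val_one, one_mul]
    apply Finset.prod_eq_one
    intro s _
    exact cc_eq_one ⟨hstep s, heven s⟩
  | succ m ih =>
    intro σ hm h
    have hne : (univ.filter fun s : Fin k => (σ (dbl s)).1 % 2 = 1).Nonempty := by
      rw [← Finset.card_pos, hm]; omega
    obtain ⟨s₀, hs₀mem⟩ := hne
    have hs₀ : (σ (dbl s₀)).1 % 2 = 1 := (Finset.mem_filter.1 hs₀mem).2
    have hcase : (σ (dbl s₀)).1 = (σ (dbl1 s₀)).1 + 1 ∧ (σ (dbl1 s₀)).1 % 2 = 0 := by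
      rcases cc_cases (h s₀) with h1 | h2
      · omega
      · exact h2
    have dvne : dbl s₀ ≠ dbl1 s₀ := by
      intro hcon
      have := congrArg Fin.val hcon
      simp [dbl, dbl1] at this
    set τ : Perm (Fin (2 * k)) := σ * Equiv.swap (dbl s₀) (dbl1 s₀) with hτdef
    have hτ0 : τ (dbl s₀) = σ (dbl1 s₀) := by
      simp [hτdef, Equiv.Perm.mul_apply, Equiv.swap_apply_left]
    have hτ1 : τ (dbl1 s₀) = σ (dbl s₀) := by
      simp [hτdef, Equiv.Perm.mul_apply, Equiv.swap_apply_right]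
    have hτs : ∀ s : Fin k, s ≠ s₀ → τ (dbl s) = σ (dbl s) ∧ τ (dbl1 s) = σ (dbl1 s) := by
      intro s hss
      have hv : s.1 ≠ s₀.1 := fun hv => hss (Fin.ext hv)
      constructor
      · rw [hτdef]
        simp only [Equiv.Perm.mul_apply]
        rw [Equiv.swap_apply_of_ne_of_ne]
        · intro hcon; have := congrArg Fin.val hcon; simp [dbl] at this; omega
        · intro hcon; have := congrArg Fin.val hcon; simp [dbl, dbl1] at this; omega
      · rw [hτdef]
        simp only [Equiv.Perm.mul_apply]
        rw [Equiv.swap_apply_of_ne_of_ne]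
        · intro hcon; have := congrArg Fin.val hcon; simp [dbl, dbl1] at this; omega
        · intro hcon; have := congrArg Fin.val hcon; simp [dbl1] at this; omega
    have h' : ∀ s : Fin k, cc (τ (dbl s)) (τ (dbl1 s)) ≠ 0 := by
      intro s
      by_cases hss : s = s₀
      · subst hss
        rw [hτ0, hτ1, cc_eq_one ⟨hcase.1, hcase.2⟩]
        omega
      · rw [(hτs s hss).1, (hτs s hss).2]; exact h s
    have hfilter : (univ.filter fun s : Fin k => (τ (dbl s)).1 % 2 = 1)
        = (univ.filter fun s : Fin k => (σ (dbl s)).1 % 2 = 1).erase s₀ := by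
      ext s
      by_cases hss : s = s₀
      · subst hss
        simp [hτ0, Finset.mem_erase]
        omega
      · simp [Finset.mem_erase, hss, (hτs s hss).1]
    have hcard : (univ.filter fun s : Fin k => (τ (dbl s)).1 % 2 = 1).card = m := by
      rw [hfilter, Finset.card_erase_of_mem hs₀mem, hm]
      omega
    have IH := ih τ hcard h'
    have hsign : (Perm.sign τ : ℤ) = -(Perm.sign σ : ℤ) := by
      rw [hτdef, Equiv.Perm.sign_mul, Equiv.Perm.sign_swap dvne]
      simp
    rw [← Finset.mul_prod_erase univ _ (Finset.mem_univ s₀)] at IH ⊢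
    rw [hτ0, hτ1, cc_eq_one ⟨hcase.1, hcase.2⟩] at IH
    have hRE : ∏ s ∈ univ.erase s₀, cc (τ (dbl s)) (τ (dbl1 s))
        = ∏ s ∈ univ.erase s₀, cc (σ (dbl s)) (σ (dbl1 s)) := by
      apply Finset.prod_congr rfl
      intro s hs
      rw [(hτs s (Finset.ne_of_mem_erase hs)).1, (hτs s (Finset.ne_of_mem_erase hs)).2]
    rw [hRE] at IH
    rw [cc_eq_negone ⟨hcase.1, hcase.2⟩]
    set R := ∏ s ∈ univ.erase s₀, cc (σ (dbl s)) (σ (dbl1 s))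
    linear_combination IH - R * hsign

lemma prod_univ_X_eq (n : ℕ) :
    ∏ i : Fin n, (X i : MvPolynomial (Fin n) ℂ) = monomial (uu n) 1 := by
  rw [monomial_eq, C_1, one_mul, Finsupp.prod]
  have hs : (uu n).support = univ := by
    ext i; simp [Finsupp.mem_support_iff, uu_apply]
  rw [hs]
  exact (Finset.prod_congr rfl fun i _ => by rw [uu_apply, pow_one]).symm

lemma prod_X_pairs {k : ℕ} (σ : Perm (Fin (2 * k))) :
    ∏ s : Fin k, ((X (σ (dbl s)) : MvPolynomial (Fin (2 * k)) ℂ) * X (σ (dbl1 s)))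
      = ∏ i, X i := by
  have hbij : Function.Bijective
      (Sum.elim (fun s : Fin k => σ (dbl s)) fun s : Fin k => σ (dbl1 s)) := by
    rw [Fintype.bijective_iff_injective_and_card]
    refine ⟨?_, by simp only [Fintype.card_sum, Fintype.card_fin]; omega⟩
    rintro (s | s) (t | t) h <;> simp only [Sum.elim_inl, Sum.elim_inr] at h <;>
      have h2 := congrArg Fin.val (σ.injective h) <;>
      simp only [dbl, dbl1] at h2
    · exact congrArg Sum.inl (Fin.ext (by omega))
    · exact absurd h2 (by omega)
    · exact absurd h2 (by omega)
    · exact congrArg Sum.inr (Fin.ext (by omega))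
  calc ∏ s : Fin k, ((X (σ (dbl s)) : MvPolynomial (Fin (2 * k)) ℂ) * X (σ (dbl1 s)))
      = (∏ s : Fin k, (X (σ (dbl s)) : MvPolynomial (Fin (2 * k)) ℂ))
          * ∏ s : Fin k, (X (σ (dbl1 s)) : MvPolynomial (Fin (2 * k)) ℂ) :=
        Finset.prod_mul_distrib
    _ = ∏ x : Fin k ⊕ Fin k,
          (X (Sum.elim (fun s : Fin k => σ (dbl s)) (fun s : Fin k => σ (dbl1 s)) x) :
            MvPolynomial (Fin (2 * k)) ℂ) := by rw [Fintype.prod_sum_type]; rfl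
    _ = ∏ i, X i := Fintype.prod_bijective _ hbij _ _ fun x => by cases x <;> rfl

end AntiSym

open AntiSym in
/-- Let `n = 2k` and let `A = H^*(Cₙ(d); ℂ)` with `d` odd.  The
antisymmetrizer `x = ∑_{σ ∈ Sₙ} sgn(σ) A_{σ(1),σ(2)} A_{σ(3),σ(4)} ⋯ A_{σ(n-1),σ(n)}`
(a homogeneous element of degree `k(d-1)`, being a sum of products of `k` generators)
is nonzero, and every `τ ∈ Sₙ` acts on it by `τ · x = sgn(τ) x` (the action permutes
the indices, `τ · A_{i,j} = A_{τ(i),τ(j)}`). -/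
theorem antisymmetrizer_spans_sign (k : ℕ) (hk : 1 ≤ k) :
    (∑ σ : Perm (Fin (2 * k)), (Perm.sign σ : ℤ) •
        ∏ s : Fin k, Agen (σ (dbl s)) (σ (dbl1 s))) ≠ 0 ∧
      ∀ τ : Perm (Fin (2 * k)),
        (∑ σ : Perm (Fin (2 * k)), (Perm.sign σ : ℤ) •
            ∏ s : Fin k, Agen (τ (σ (dbl s))) (τ (σ (dbl1 s)))) =
          (Perm.sign τ : ℤ) •
            ∑ σ : Perm (Fin (2 * k)), (Perm.sign σ : ℤ) •
              ∏ s : Fin k, Agen (σ (dbl s)) (σ (dbl1 s)) := by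
  constructor
  · -- nonvanishing
    set P : FreeOdd (2 * k) :=
      ∑ σ : Perm (Fin (2 * k)), (Perm.sign σ : ℤ) •
        ∏ s : Fin k, Xs (σ (dbl s)) (σ (dbl1 s)) with hP
    have hx : (∑ σ : Perm (Fin (2 * k)), (Perm.sign σ : ℤ) •
        ∏ s : Fin k, Agen (σ (dbl s)) (σ (dbl1 s)))
        = Ideal.Quotient.mk (oddRelIdeal (2 * k)) P := by
      rw [hP, map_sum]
      refine Finset.sum_congr rfl fun σ _ => ?_
      rw [map_zsmul, map_prod]
      simp_rw [Agen_eq_mk]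
    intro hzero
    rw [hx, Ideal.Quotient.eq_zero_iff_mem] at hzero
    have h0 := coeff_uu_Phi hzero 1
    rw [one_mul] at h0
    -- compute the coefficient
    have hΦP : coeff (uu (2 * k)) (Φ (2 * k) P)
        = ((∑ σ : Perm (Fin (2 * k)), (Perm.sign σ : ℤ) *
            ∏ s : Fin k, cc (σ (dbl s)) (σ (dbl1 s)) : ℤ) : ℂ) := by
      rw [hP, map_sum, coeff_sum]
      push_cast
      refine Finset.sum_congr rfl fun σ _ => ?_
      rw [map_zsmul, map_prod]
      simp_rw [Φ_Xs]
      rw [Finset.prod_mul_distrib]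
      rw [show (∏ x : Fin k, (C (((cc (σ (dbl x)) (σ (dbl1 x)) : ℤ) : ℂ)) :
            MvPolynomial (Fin (2 * k)) ℂ))
          = C (∏ x : Fin k, ((cc (σ (dbl x)) (σ (dbl1 x)) : ℤ) : ℂ)) from
        (map_prod (C : ℂ →+* MvPolynomial (Fin (2 * k)) ℂ) _ _).symm]
      rw [prod_X_pairs, prod_univ_X_eq,
        C_mul_monomial, mul_one, coeff_smul, coeff_monomial, if_pos rfl]
      push_cast [zsmul_eq_mul]
      ring
    rw [hΦP] at h0
    have hint : (∑ σ : Perm (Fin (2 * k)), (Perm.sign σ : ℤ) *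
        ∏ s : Fin k, cc (σ (dbl s)) (σ (dbl1 s))) = 0 := by exact_mod_cast h0
    -- but the sum is positive
    have hterm : ∀ σ : Perm (Fin (2 * k)),
        0 ≤ (Perm.sign σ : ℤ) * ∏ s : Fin k, cc (σ (dbl s)) (σ (dbl1 s)) := by
      intro σ
      by_cases hall : ∀ s : Fin k, cc (σ (dbl s)) (σ (dbl1 s)) ≠ 0
      · rw [sign_eq _ σ rfl hall]; norm_num
      · push_neg at hall
        obtain ⟨s, hs⟩ := hall
        rw [Finset.prod_eq_zero (Finset.mem_univ s) hs, mul_zero]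
    have hone : (Perm.sign (1 : Perm (Fin (2 * k))) : ℤ) *
        ∏ s : Fin k, cc ((1 : Perm (Fin (2 * k))) (dbl s)) ((1 : Perm (Fin (2 * k))) (dbl1 s))
          = 1 := by
      rw [map_one]
      simp only [Equiv.Perm.one_apply, Units.val_one, one_mul]
      apply Finset.prod_eq_one
      intro s _
      exact cc_eq_one ⟨rfl, by simp [dbl]⟩
    have hpos : (1 : ℤ) ≤ ∑ σ : Perm (Fin (2 * k)), (Perm.sign σ : ℤ) *
        ∏ s : Fin k, cc (σ (dbl s)) (σ (dbl1 s)) := by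
      rw [← hone]
      exact Finset.single_le_sum (fun σ _ => hterm σ) (Finset.mem_univ 1)
    omega
  · -- equivariance
    intro τ
    rw [Finset.smul_sum]
    refine Fintype.sum_equiv (Equiv.mulLeft τ) _ _ fun σ => ?_
    have happ : ∀ x, (Equiv.mulLeft τ σ) x = τ (σ x) := fun x => rfl
    simp_rw [happ]
    rw [smul_smul]
    congr 1
    have hsq : (Perm.sign τ : ℤ) * (Perm.sign τ : ℤ) = 1 := by
      rcases Int.units_eq_one_or (Perm.sign τ) with h | h <;> rw [h] <;> norm_num
    have : Perm.sign (Equiv.mulLeft τ σ) = Perm.sign τ * Perm.sign σ := by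
      show Perm.sign (τ * σ) = _
      rw [map_mul]
    rw [this]
    push_cast
    linear_combination (-(Perm.sign σ : ℤ)) * hsq
end
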